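/- Let A be a unital JB-algebra (e.g., the selfadjoint part of a unital C*-algebra). For a, b ∈ A, lim_{n→∞} n·d_T(exp(a/n), exp(b/n)) = ‖a - b‖. -/

import Mathlib

set_option maxHeartbeats 1000000

noncomputable section

variable {A : Type*} [CStarAlgebra A] [PartialOrder A] [StarOrderedRing A]

/-- `M(a/b) = inf {l > 0 : a ≤ l b}`. -/
def Mrel (a b : A) : ℝ := sInf {l : ℝ | 0 < l ∧ a ≤ l • b}

/-- Thompson's metric. -/
def dT (a b : A) : ℝ := Real.log (max (Mrel a b) (Mrel b a))

/-- Hilbert's metric. -/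
def dH (a b : A) : ℝ := Real.log (Mrel a b * Mrel b a)

/-- The variation seminorm `max σ(a) - min σ(a)`. -/
def vnorm (a : A) : ℝ := sSup (spectrum ℝ a) - sInf (spectrum ℝ a)

section Stmt7Aux

open NormedSpace Filter

noncomputable instance ratNormedAlgebraOfReal {B : Type*} [NormedRing B] [NormedAlgebra ℝ B] :
    NormedAlgebra ℚ B := NormedAlgebra.restrictScalars ℚ ℝ B

section BanachAlg

variable {B : Type*} [NormedRing B] [NormOneClass B] [NormedAlgebra ℝ B] [CompleteSpace B]

theorem rem_bound (x : B) : ‖exp x - 1 - x‖ ≤ Real.exp ‖x‖ - 1 - ‖x‖ := by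
  have hsum : Summable (fun n : ℕ => (n.factorial⁻¹ : ℝ) • x ^ n) := expSeries_summable' x
  have hnorm : Summable (fun n : ℕ => ‖(n.factorial⁻¹ : ℝ) • x ^ n‖) := norm_expSeries_summable' x
  have hsum2 : Summable (fun n : ℕ => (((n+2).factorial⁻¹ : ℝ)) • x ^ (n+2)) := by
    simpa using (summable_nat_add_iff 2).mpr hsum
  have hnorm2 : Summable (fun n : ℕ => ‖(((n+2).factorial⁻¹ : ℝ)) • x ^ (n+2)‖) := by
    simpa using (summable_nat_add_iff 2).mpr hnorm
  have hR : Summable (fun n : ℕ => ‖x‖ ^ n / n.factorial) := Real.summable_pow_div_factorial ‖x‖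
  have hR2 : Summable (fun n : ℕ => ‖x‖ ^ (n+2) / (n+2).factorial) := by
    simpa using (summable_nat_add_iff 2).mpr hR
  have hexp : exp x = 1 + x + ∑' n : ℕ, ((n+2).factorial⁻¹ : ℝ) • x ^ (n+2) := by
    simp only [exp_eq_tsum ℝ]
    rw [Summable.tsum_eq_zero_add hsum]
    rw [Summable.tsum_eq_zero_add (by simpa using (summable_nat_add_iff 1).mpr hsum)]
    simp [add_assoc]
  have hrexp : Real.exp ‖x‖ = 1 + ‖x‖ + ∑' n : ℕ, ‖x‖ ^ (n+2) / (n+2).factorial := by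
    rw [Real.exp_eq_exp_ℝ]
    simp only [exp_eq_tsum_div]
    rw [Summable.tsum_eq_zero_add hR]
    rw [Summable.tsum_eq_zero_add (by simpa using (summable_nat_add_iff 1).mpr hR)]
    simp [add_assoc]
  rw [hexp, hrexp]
  have h1 : (1:B) + x + ∑' n : ℕ, ((n+2).factorial⁻¹ : ℝ) • x ^ (n+2) - 1 - x
      = ∑' n : ℕ, ((n+2).factorial⁻¹ : ℝ) • x ^ (n+2) := by abel
  have h2 : (1:ℝ) + ‖x‖ + ∑' n : ℕ, ‖x‖ ^ (n+2) / (n+2).factorial - 1 - ‖x‖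
      = ∑' n : ℕ, ‖x‖ ^ (n+2) / (n+2).factorial := by ring
  rw [h1, h2]
  refine (norm_tsum_le_tsum_norm hnorm2).trans (Summable.tsum_le_tsum ?_ hnorm2 hR2)
  intro n
  rw [norm_smul]
  calc ‖((n+2).factorial⁻¹ : ℝ)‖ * ‖x ^ (n+2)‖
      ≤ ((n+2).factorial⁻¹ : ℝ) * ‖x‖ ^ (n+2) := by
        rw [Real.norm_eq_abs, abs_of_nonneg (by positivity)]
        exact mul_le_mul_of_nonneg_left (norm_pow_le' x (by omega)) (by positivity)
    _ = ‖x‖ ^ (n+2) / (n+2).factorial := by ring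

theorem exp_quad {t : ℝ} (h0 : 0 ≤ t) (h1 : t ≤ 1) : Real.exp t - 1 - t ≤ t ^ 2 := by
  have := Real.exp_bound (x := t) (by rw [abs_of_nonneg h0]; exact h1) (n := 2) (by norm_num)
  have h2 : ∑ m ∈ Finset.range 2, t ^ m / m.factorial = 1 + t := by
    simp [Finset.sum_range_succ]
  rw [h2, abs_of_nonneg h0] at this
  have h3 := (abs_le.mp this).2
  have : t ^ 2 * (3 / 4) ≤ t ^ 2 := by nlinarith
  norm_num at h3
  nlinarith [h3]

theorem rem_sq (x : B) (hx : ‖x‖ ≤ 1) : ‖exp x - 1 - x‖ ≤ ‖x‖ ^ 2 :=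
  (rem_bound x).trans (exp_quad (norm_nonneg x) hx)

theorem norm_mul_le₃ (a b c : B) : ‖a * b * c‖ ≤ ‖a‖ * ‖b‖ * ‖c‖ :=
  (norm_mul_le _ _).trans (mul_le_mul_of_nonneg_right (norm_mul_le a b) (norm_nonneg c))

theorem exp_norm_le (x : B) (hx : ‖x‖ ≤ 1) : ‖exp x‖ ≤ 3 := by
  have h := rem_sq x hx
  have he : exp x = (exp x - 1 - x) + 1 + x := by abel
  rw [he]
  calc ‖(exp x - 1 - x) + 1 + x‖ ≤ ‖exp x - 1 - x‖ + ‖(1:B)‖ + ‖x‖ :=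
        (norm_add_le _ _).trans (by gcongr; exact norm_add_le _ _)
    _ ≤ 1 + 1 + 1 := by
        rw [norm_one]
        have : ‖x‖^2 ≤ 1 := by nlinarith [norm_nonneg x]
        gcongr <;> linarith [h.trans this]
    _ = 3 := by norm_num

theorem key_est (u w z : B) (hz : z = u + u + w) (hu : ‖u‖ ≤ 4⁻¹) (hw : ‖w‖ ≤ 4⁻¹) :
    ‖exp u * exp w * exp u - exp z‖ ≤ 20 * (‖u‖ + ‖w‖) ^ 2 := by
  set Eu := exp u with hEu'
  set Ew := exp w with hEw'
  set Ez := exp z with hEz'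
  have hu1 : ‖u‖ ≤ 1 := hu.trans (by norm_num)
  have hw1 : ‖w‖ ≤ 1 := hw.trans (by norm_num)
  have hznorm : ‖z‖ ≤ ‖u‖ + ‖u‖ + ‖w‖ := by
    rw [hz]; exact (norm_add_le _ _).trans (by gcongr; exact norm_add_le _ _)
  have hz1 : ‖z‖ ≤ 1 := by refine hznorm.trans ?_; linarith
  have hru : ‖Eu - 1 - u‖ ≤ ‖u‖ ^ 2 := rem_sq u hu1
  have hrw : ‖Ew - 1 - w‖ ≤ ‖w‖ ^ 2 := rem_sq w hw1
  have hrz : ‖Ez - 1 - z‖ ≤ ‖z‖ ^ 2 := rem_sq z hz1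
  have hEu3 : ‖Eu‖ ≤ 3 := exp_norm_le u hu1
  have hEw3 : ‖Ew‖ ≤ 3 := exp_norm_le w hw1
  have hid : Eu * Ew * Eu - Ez =
      (u*u + u*w + w*u + u*(w*u)) + (1+u)*(1+w)*(Eu - 1 - u) + (1+u)*((Ew - 1 - w)*Eu)
        + (Eu - 1 - u)*(Ew*Eu) - (Ez - 1 - (u+u+w)) := by
    subst hz; noncomm_ring
  rw [hid]
  set s := ‖u‖ with hs'
  set t := ‖w‖ with ht'
  have hs0 : 0 ≤ s := norm_nonneg u
  have ht0 : 0 ≤ t := norm_nonneg w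
  have h1u : ‖(1:B) + u‖ ≤ 1 + s := (norm_add_le _ _).trans (by rw [norm_one])
  have h1w : ‖(1:B) + w‖ ≤ 1 + t := (norm_add_le _ _).trans (by rw [norm_one])
  have hQ : ‖u*u + u*w + w*u + u*(w*u)‖ ≤ s*s + s*t + t*s + s*(t*s) := by
    refine (norm_add_le _ _).trans (add_le_add ((norm_add_le _ _).trans (add_le_add
      ((norm_add_le _ _).trans (add_le_add (norm_mul_le _ _) (norm_mul_le _ _)))
      (norm_mul_le _ _))) ?_)
    exact (norm_mul_le _ _).trans (by gcongr; exact norm_mul_le _ _)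
  have hT2 : ‖(1+u)*(1+w)*(Eu - 1 - u)‖ ≤ (1+s)*(1+t)*(s^2) :=
    (norm_mul_le₃ _ _ _).trans (by gcongr <;> positivity)
  have hT3 : ‖(1+u)*((Ew - 1 - w)*Eu)‖ ≤ (1+s)*(t^2*3) := by
    refine (norm_mul_le _ _).trans ?_
    have := (norm_mul_le (Ew - 1 - w) Eu).trans (by gcongr <;> positivity : ‖Ew - 1 - w‖ * ‖Eu‖ ≤ t^2*3)
    gcongr
  have hT4 : ‖(Eu - 1 - u)*(Ew*Eu)‖ ≤ s^2*(3*3) := by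
    refine (norm_mul_le _ _).trans ?_
    have := (norm_mul_le Ew Eu).trans (by gcongr <;> positivity : ‖Ew‖ * ‖Eu‖ ≤ 3*3)
    gcongr
  have hrz' : ‖Ez - 1 - (u+u+w)‖ ≤ (s+s+t)^2 := by
    rw [← hz]
    refine hrz.trans ?_
    gcongr
  calc ‖(u*u + u*w + w*u + u*(w*u)) + (1+u)*(1+w)*(Eu - 1 - u) + (1+u)*((Ew - 1 - w)*Eu)
        + (Eu - 1 - u)*(Ew*Eu) - (Ez - 1 - (u+u+w))‖
      ≤ (s*s + s*t + t*s + s*(t*s)) + (1+s)*(1+t)*(s^2) + (1+s)*(t^2*3) + s^2*(3*3) + (s+s+t)^2 := by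
        refine (norm_sub_le _ _).trans ?_
        exact add_le_add ((norm_add_le _ _).trans (add_le_add ((norm_add_le _ _).trans
          (add_le_add ((norm_add_le _ _).trans (add_le_add hQ hT2)) hT3)) hT4)) hrz'
    _ ≤ 20 * (s + t) ^ 2 := by
        nlinarith [mul_nonneg hs0 ht0, mul_nonneg (mul_nonneg hs0 hs0) ht0,
          mul_nonneg (mul_nonneg hs0 ht0) ht0, mul_nonneg (mul_nonneg (mul_nonneg hs0 hs0) hs0) ht0,
          mul_nonneg hs0 (mul_nonneg ht0 ht0), sq_nonneg (s-t), sq_nonneg s, sq_nonneg t,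
          mul_nonneg (mul_nonneg hs0 hs0) (mul_nonneg hs0 ht0), hu1, hw1]

end BanachAlg

theorem sa_exp {x : A} (hx : IsSelfAdjoint x) : IsSelfAdjoint (exp x) := by
  rw [← CFC.real_exp_eq_normedSpace_exp hx]
  exact cfc_predicate Real.exp x

theorem exp_mul_exp_neg {x : A} : exp x * exp (-x) = 1 := by
  rw [← exp_add_of_commute (Commute.refl x).neg_right, add_neg_cancel, exp_zero]

theorem sa_smul {x : A} (hx : IsSelfAdjoint x) (r : ℝ) : IsSelfAdjoint (r • x) := by
  rw [IsSelfAdjoint, star_smul, star_trivial, hx.star_eq]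

theorem abs_log_le {e : ℝ} (he : |e| ≤ 2⁻¹) : |Real.log (1 + e)| ≤ 2 * |e| := by
  have he1 := abs_le.mp he
  have h1 : (0:ℝ) < 1 + e := by linarith
  have h2 : Real.log (1 + e) ≤ e := by
    have := Real.log_le_sub_one_of_pos h1; linarith
  have h3 : Real.log (1 + e)⁻¹ ≤ (1 + e)⁻¹ - 1 := Real.log_le_sub_one_of_pos (inv_pos.mpr h1)
  rw [Real.log_inv] at h3
  have h4 : (1 + e)⁻¹ ≤ 2 := by
    rw [inv_le_comm₀ h1 (by norm_num)]
    linarith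
  rw [abs_le]
  have h5 : (1+e) * (1+e)⁻¹ = 1 := mul_inv_cancel₀ h1.ne'
  constructor
  · rcases le_or_gt 0 e with h | h
    · have : -Real.log (1+e) ≤ (1+e)⁻¹ - 1 := h3
      have h6 : (1+e)⁻¹ ≤ 1 := by rw [inv_le_one_iff₀]; right; linarith
      rw [abs_of_nonneg h]
      nlinarith
    · rw [abs_of_neg h]
      nlinarith
  · calc Real.log (1+e) ≤ e := h2
      _ ≤ |e| := le_abs_self e
      _ ≤ 2 * |e| := by linarith [abs_nonneg e]

section Nontriv
variable [Nontrivial A]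

theorem Mrel_exp (x y : A) (hx : IsSelfAdjoint x) (hy : IsSelfAdjoint y) :
    Mrel (exp x) (exp y) = ‖exp (-((2:ℝ)⁻¹ • y)) * exp x * exp (-((2:ℝ)⁻¹ • y))‖ := by
  set c := exp (-((2:ℝ)⁻¹ • y)) with hc'
  set d := exp ((2:ℝ)⁻¹ • y) with hd'
  have hyy : IsSelfAdjoint ((2:ℝ)⁻¹ • y) := by rw [IsSelfAdjoint, star_smul, star_trivial, hy.star_eq]
  have hsc : IsSelfAdjoint c := sa_exp hyy.neg
  have hcd : c * d = 1 := by rw [hc', hd', ← exp_add_of_commute ((Commute.refl _).neg_left), neg_add_cancel, exp_zero]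
  have hdc : d * c = 1 := exp_mul_exp_neg
  have hdd : d * d = exp y := by
    rw [hd', ← exp_add_of_commute (Commute.refl _)]
    congr 1
    module
  have hcyc : c * exp y * c = 1 := by
    have h1 : c * exp y = d := by
      rw [hc', hd', ← exp_add_of_commute]
      · congr 1; module
      · exact ((Commute.refl y).smul_left _).neg_left
    rw [h1, hdc]
  set X := c * exp x * c with hX'
  have hXpos : 0 ≤ X := by
    have h0 : (0:A) ≤ exp x := hx.exp_nonneg
    simpa using hsc.conjugate_le_conjugate h0
  have hXunit : IsUnit X := ((isUnit_exp _).mul (isUnit_exp x)).mul (isUnit_exp _)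
  have hXnorm : 0 < ‖X‖ := norm_pos_iff.mpr hXunit.ne_zero
  have hset : {l : ℝ | 0 < l ∧ exp x ≤ l • exp y} = Set.Ici ‖X‖ := by
    ext l
    simp only [Set.mem_setOf_eq, Set.mem_Ici]
    constructor
    · rintro ⟨hl, hle⟩
      have h1 : c * exp x * c ≤ c * (l • exp y) * c := by
        simpa [mul_assoc] using hsc.conjugate_le_conjugate hle
      have h2 : c * (l • exp y) * c = l • (c * exp y * c) := by
        simp [mul_smul_comm, smul_mul_assoc]
      rw [h2, hcyc] at h1
      have := (CStarAlgebra.norm_le_iff_le_algebraMap X hl.le hXpos).mpr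
        (by rwa [Algebra.algebraMap_eq_smul_one])
      exact this
    · intro hl
      have hl0 : 0 < l := lt_of_lt_of_le hXnorm hl
      refine ⟨hl0, ?_⟩
      have h1 : X ≤ l • (1:A) := by
        rw [← Algebra.algebraMap_eq_smul_one]
        exact (CStarAlgebra.norm_le_iff_le_algebraMap X hl0.le hXpos).mp hl
      have hsd : IsSelfAdjoint d := sa_exp hyy
      have h2 : d * X * d ≤ d * (l • (1:A)) * d := by
        simpa [mul_assoc] using hsd.conjugate_le_conjugate h1
      have h3 : d * X * d = exp x := by
        rw [hX']
        calc d * (c * exp x * c) * d = (d * c) * exp x * (c * d) := by noncomm_ring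
          _ = exp x := by rw [hdc, hcd, one_mul, mul_one]
      have h4 : d * (l • (1:A)) * d = l • exp y := by
        rw [← hdd]; simp [mul_smul_comm, smul_mul_assoc]
      rwa [h3, h4] at h2
  rw [Mrel, hset, csInf_Ici]

theorem spec_isGreatest {x : A} (hx : IsSelfAdjoint x) :
    IsGreatest (spectrum ℝ x) (sSup (spectrum ℝ x)) :=
  (spectrum.isCompact x).isGreatest_sSup hx.spectrum_nonempty

theorem norm_exp_eq {x : A} (hx : IsSelfAdjoint x) :
    ‖exp x‖ = Real.exp (sSup (spectrum ℝ x)) := by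
  rw [← CFC.real_exp_eq_normedSpace_exp hx]
  have h2 : IsGreatest ((fun t => ‖Real.exp t‖) '' spectrum ℝ x) ‖cfc Real.exp x‖ :=
    IsGreatest.norm_cfc (𝕜 := ℝ) Real.exp x (by fun_prop) hx
  have h3 : IsGreatest ((fun t => ‖Real.exp t‖) '' spectrum ℝ x)
      (Real.exp (sSup (spectrum ℝ x))) := by
    have h4 : IsGreatest (Real.exp '' spectrum ℝ x) (Real.exp (sSup (spectrum ℝ x))) :=
      (Real.exp_monotone.monotoneOn _).map_isGreatest (spec_isGreatest hx)
    have : (fun t => ‖Real.exp t‖) '' spectrum ℝ x = Real.exp '' spectrum ℝ x := by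
      apply Set.image_congr
      intro t _
      rw [Real.norm_eq_abs, Real.abs_exp]
    rwa [this]
  exact h2.unique h3

theorem norm_eq_max {c : A} (hc : IsSelfAdjoint c) :
    ‖c‖ = max (sSup (spectrum ℝ c)) (sSup (spectrum ℝ (-c))) := by
  set l := sSup (spectrum ℝ c) with hl'
  set m := sInf (spectrum ℝ c) with hm'
  have hneg : sSup (spectrum ℝ (-c)) = -m := by
    rw [← spectrum.neg_eq, hm', Real.sInf_def, neg_neg]
  rw [hneg]
  have hgr : IsGreatest (spectrum ℝ c) l := spec_isGreatest hc
  have hle : IsLeast (spectrum ℝ c) m :=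
    (spectrum.isCompact c).isLeast_sInf hc.spectrum_nonempty
  have h2 : IsGreatest ((fun t => ‖t‖) '' spectrum ℝ c) ‖cfc (id : ℝ → ℝ) c‖ :=
    IsGreatest.norm_cfc (𝕜 := ℝ) id c (by fun_prop) hc
  rw [cfc_id ℝ c hc] at h2
  have h3 : IsGreatest ((fun t => ‖t‖) '' spectrum ℝ c) (max l (-m)) := by
    constructor
    · rcases le_total (-m) l with h | h
      · have hml : m ≤ l := hgr.2 hle.1
        have hl0 : 0 ≤ l := by linarith
        refine ⟨l, hgr.1, ?_⟩
        simp only [Real.norm_eq_abs]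
        rw [abs_of_nonneg hl0, max_eq_left h]
      · have hml : m ≤ l := hgr.2 hle.1
        have hm0 : m ≤ 0 := by linarith
        refine ⟨m, hle.1, ?_⟩
        simp only [Real.norm_eq_abs]
        rw [abs_of_nonpos hm0, max_eq_right h]
    · rintro r ⟨t, ht, rfl⟩
      simp only [Real.norm_eq_abs]
      rw [abs_le]
      constructor
      · have h1 : -max l (-m) ≤ m := by
          have := le_max_right l (-m); linarith
        linarith [hle.2 ht]
      · exact (hgr.2 ht).trans (le_max_left _ _)
  exact h2.unique h3

theorem sSup_smul_spec (c : A) (hc : IsSelfAdjoint c) (r : ℝ) (hr : 0 ≤ r) :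
    sSup (spectrum ℝ (r • c)) = r * sSup (spectrum ℝ c) := by
  have h1 : r • c = cfc (fun t : ℝ => r * t) c := (cfc_const_mul_id r c hc).symm
  rw [h1, cfc_map_spectrum (R := ℝ) (fun t : ℝ => r * t) c hc (by fun_prop)]
  have hmono : Monotone (fun t : ℝ => r * t) := fun s t h => mul_le_mul_of_nonneg_left h hr
  exact ((hmono.monotoneOn _).map_isGreatest (spec_isGreatest hc)).csSup_eq

theorem Mrel_exp_pos (x y : A) (hx : IsSelfAdjoint x) (hy : IsSelfAdjoint y) :
    0 < Mrel (exp x) (exp y) := by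
  rw [Mrel_exp x y hx hy]
  have hXunit : IsUnit (exp (-((2:ℝ)⁻¹ • y)) * exp x * exp (-((2:ℝ)⁻¹ • y))) :=
    ((isUnit_exp _).mul (isUnit_exp x)).mul (isUnit_exp _)
  exact norm_pos_iff.mpr hXunit.ne_zero

theorem tendsto_part (a b : A) (ha : IsSelfAdjoint a) (hb : IsSelfAdjoint b) :
    Tendsto (fun n : ℕ => (n : ℝ) * Real.log
        (Mrel (cfc Real.exp ((n : ℝ)⁻¹ • a)) (cfc Real.exp ((n : ℝ)⁻¹ • b))))
      atTop (nhds (sSup (spectrum ℝ (a - b)))) := by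
  set c := a - b with hc'
  have hc : IsSelfAdjoint c := ha.sub hb
  set l := sSup (spectrum ℝ c) with hl'
  set K₀ : ℝ := ‖a‖ + ‖b‖ + 1 with hK₀'
  have hK₀pos : 0 < K₀ := by positivity
  set K : ℝ := 80 * K₀ ^ 2 * Real.exp |l| with hK'
  have hKpos : 0 < K := by positivity
  obtain ⟨N₀, hN₀⟩ := exists_nat_ge (4 * K₀ + 2 * K + 1)
  have hmain : ∀ n : ℕ, N₀ + 1 ≤ n →
      ‖(n : ℝ) * Real.log
        (Mrel (cfc Real.exp ((n : ℝ)⁻¹ • a)) (cfc Real.exp ((n : ℝ)⁻¹ • b))) - l‖ ≤ 2 * K / n := by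
    intro n hn
    have hn1 : (1:ℝ) ≤ n := by exact_mod_cast Nat.one_le_iff_ne_zero.mpr (by omega)
    have hnpos : (0:ℝ) < n := by linarith
    have hnN : 4 * K₀ + 2 * K + 1 ≤ (n:ℝ) := by
      refine hN₀.trans ?_
      exact_mod_cast Nat.cast_le.mpr (by omega)
    have han : IsSelfAdjoint ((n:ℝ)⁻¹ • a) := sa_smul ha _
    have hbn : IsSelfAdjoint ((n:ℝ)⁻¹ • b) := sa_smul hb _
    set u : A := -((2:ℝ)⁻¹ • ((n:ℝ)⁻¹ • b)) with hu'
    set w : A := (n:ℝ)⁻¹ • a with hw'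
    set z : A := (n:ℝ)⁻¹ • c with hz'
    have hzsa : IsSelfAdjoint z := sa_smul hc _
    have hz : z = u + u + w := by rw [hu', hw', hz', hc']; module
    have hub : ‖u‖ ≤ (n:ℝ)⁻¹ * K₀ := by
      rw [hu', norm_neg, norm_smul, norm_smul]
      simp only [Real.norm_eq_abs, abs_of_nonneg (by positivity : (0:ℝ) ≤ (2:ℝ)⁻¹),
        abs_of_nonneg (by positivity : (0:ℝ) ≤ (n:ℝ)⁻¹)]
      rw [hK₀']
      have hbb : ‖b‖ ≤ K₀ := by rw [hK₀']; linarith [norm_nonneg a]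
      calc 2⁻¹ * ((n:ℝ)⁻¹ * ‖b‖) ≤ 1 * ((n:ℝ)⁻¹ * ‖b‖) := by
            apply mul_le_mul_of_nonneg_right (by norm_num); positivity
        _ = (n:ℝ)⁻¹ * ‖b‖ := by ring
        _ ≤ (n:ℝ)⁻¹ * (‖a‖ + ‖b‖ + 1) := by
            apply mul_le_mul_of_nonneg_left (by linarith [norm_nonneg a]); positivity
    have hwb : ‖w‖ ≤ (n:ℝ)⁻¹ * K₀ := by
      rw [hw', norm_smul, Real.norm_eq_abs, abs_of_nonneg (by positivity : (0:ℝ) ≤ (n:ℝ)⁻¹)]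
      apply mul_le_mul_of_nonneg_left _ (by positivity)
      rw [hK₀']; linarith [norm_nonneg b]
    have hquarter : (n:ℝ)⁻¹ * K₀ ≤ 4⁻¹ := by
      rw [inv_mul_le_iff₀ hnpos]
      linarith
    have hkey : ‖exp u * exp w * exp u - exp z‖ ≤ 20 * (‖u‖ + ‖w‖) ^ 2 :=
      key_est u w z hz (hub.trans hquarter) (hwb.trans hquarter)
    have hkey2 : ‖exp u * exp w * exp u - exp z‖ ≤ 80 * K₀^2 / n^2 := by
      refine hkey.trans ?_
      have h1 : ‖u‖ + ‖w‖ ≤ 2 * ((n:ℝ)⁻¹ * K₀) := by linarith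
      have h2 : (‖u‖ + ‖w‖)^2 ≤ (2 * ((n:ℝ)⁻¹ * K₀))^2 := by
        apply sq_le_sq' _ h1
        have := norm_nonneg u; have := norm_nonneg w
        nlinarith [mul_pos (inv_pos.mpr hnpos) hK₀pos]
      calc 20 * (‖u‖ + ‖w‖)^2 ≤ 20 * (2 * ((n:ℝ)⁻¹ * K₀))^2 := by linarith
        _ = 80 * K₀^2 / n^2 := by field_simp; try ring
    -- norm of exp z
    have hEz : ‖exp z‖ = Real.exp ((n:ℝ)⁻¹ * l) := by
      rw [norm_exp_eq hzsa, hz', sSup_smul_spec c hc _ (by positivity)]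
    -- Mrel = norm
    have hMrel : Mrel (cfc Real.exp ((n : ℝ)⁻¹ • a)) (cfc Real.exp ((n : ℝ)⁻¹ • b))
        = ‖exp u * exp w * exp u‖ := by
      rw [CFC.real_exp_eq_normedSpace_exp han, CFC.real_exp_eq_normedSpace_exp hbn]
      rw [Mrel_exp _ _ han hbn]
    set M : ℝ := Mrel (cfc Real.exp ((n : ℝ)⁻¹ • a)) (cfc Real.exp ((n : ℝ)⁻¹ • b)) with hM'
    have hdiff : |M - Real.exp ((n:ℝ)⁻¹ * l)| ≤ 80 * K₀^2 / n^2 := by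
      rw [hMrel, ← hEz]
      exact (abs_norm_sub_norm_le _ _).trans hkey2
    obtain ⟨e, he'⟩ : ∃ e : ℝ, e = M * Real.exp (-((n:ℝ)⁻¹ * l)) - 1 := ⟨_, rfl⟩
    have hefact : e = (M - Real.exp ((n:ℝ)⁻¹ * l)) * Real.exp (-((n:ℝ)⁻¹ * l)) := by
      rw [he', sub_mul, ← Real.exp_add]
      simp
    have heb : |e| ≤ K / n^2 := by
      rw [hefact, abs_mul, Real.abs_exp]
      have h1 : Real.exp (-((n:ℝ)⁻¹ * l)) ≤ Real.exp |l| := by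
        apply Real.exp_le_exp.mpr
        have h2 : |(n:ℝ)⁻¹ * l| ≤ |l| := by
          rw [abs_mul, abs_of_nonneg (by positivity : (0:ℝ) ≤ (n:ℝ)⁻¹)]
          calc (n:ℝ)⁻¹ * |l| ≤ 1 * |l| := by
                apply mul_le_mul_of_nonneg_right _ (abs_nonneg l)
                rw [inv_le_one_iff₀]; right; linarith
            _ = |l| := one_mul _
        calc -((n:ℝ)⁻¹ * l) ≤ |(n:ℝ)⁻¹ * l| := neg_le_abs _
          _ ≤ |l| := h2
      calc |M - Real.exp ((n:ℝ)⁻¹ * l)| * Real.exp (-((n:ℝ)⁻¹ * l))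
          ≤ (80 * K₀^2 / n^2) * Real.exp |l| := by
            apply mul_le_mul hdiff h1 (Real.exp_pos _).le (by positivity)
        _ = K / n^2 := by rw [hK']; ring
    have heh : |e| ≤ 2⁻¹ := by
      refine heb.trans ?_
      rw [div_le_iff₀ (by positivity)]
      nlinarith [hKpos, hK₀pos]
    have hM_eq : M = (1 + e) * Real.exp ((n:ℝ)⁻¹ * l) := by
      rw [he']
      have : (1 + (M * Real.exp (-((n:ℝ)⁻¹ * l)) - 1)) = M * Real.exp (-((n:ℝ)⁻¹ * l)) := by ring
      rw [this, mul_assoc, ← Real.exp_add]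
      simp
    have h1e : (0:ℝ) < 1 + e := by
      obtain ⟨h1, h2⟩ := abs_le.mp heh
      norm_num at h1 h2 ⊢
      linarith
    have hlogM : Real.log M = Real.log (1 + e) + (n:ℝ)⁻¹ * l := by
      rw [hM_eq, Real.log_mul h1e.ne' (Real.exp_pos _).ne', Real.log_exp]
    have hfinal : (n:ℝ) * Real.log M - l = (n:ℝ) * Real.log (1 + e) := by
      rw [hlogM]
      field_simp
      ring
    rw [hfinal, Real.norm_eq_abs, abs_mul, abs_of_nonneg hnpos.le]
    calc (n:ℝ) * |Real.log (1 + e)| ≤ (n:ℝ) * (2 * |e|) := by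
          apply mul_le_mul_of_nonneg_left (abs_log_le heh) hnpos.le
      _ ≤ (n:ℝ) * (2 * (K / n^2)) := by
          apply mul_le_mul_of_nonneg_left (by linarith) hnpos.le
      _ = 2 * K / n := by field_simp
  have hto : Tendsto (fun n : ℕ => 2 * K / (n:ℝ)) atTop (nhds 0) :=
    tendsto_const_div_atTop_nhds_zero_nat _
  have := squeeze_zero_norm' (Filter.eventually_atTop.mpr ⟨N₀ + 1, hmain⟩) hto
  have h2 := this.add_const l
  simpa using h2

end Nontriv

end Stmt7Aux

/-- `n d_T(exp(a/n), exp(b/n)) → ‖a - b‖`. -/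
theorem stmt7 (a b : A) (ha : IsSelfAdjoint a) (hb : IsSelfAdjoint b) :
    Filter.Tendsto
      (fun n : ℕ => (n : ℝ) * dT (cfc Real.exp ((n : ℝ)⁻¹ • a)) (cfc Real.exp ((n : ℝ)⁻¹ • b)))
      Filter.atTop (nhds ‖a - b‖) := by
  open NormedSpace Filter in
  rcases subsingleton_or_nontrivial A with hS | hN
  · have hab : a - b = 0 := Subsingleton.elim _ _
    rw [hab, norm_zero]
    have h0 : ∀ x y : A, Mrel x y = 0 := by
      intro x y
      have hset : {l : ℝ | 0 < l ∧ x ≤ l • y} = Set.Ioi 0 := by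
        ext l
        simp only [Set.mem_setOf_eq, Set.mem_Ioi]
        exact ⟨fun h => h.1, fun h => ⟨h, le_of_eq (Subsingleton.elim _ _)⟩⟩
      rw [Mrel, hset, csInf_Ioi]
    have : ∀ n : ℕ, (n : ℝ) * dT (cfc Real.exp ((n : ℝ)⁻¹ • a)) (cfc Real.exp ((n : ℝ)⁻¹ • b))
        = 0 := by
      intro n
      rw [dT, h0, h0]
      simp
    simpa [this] using tendsto_const_nhds (α := ℝ) (f := Filter.atTop (α := ℕ))
  · have hc : IsSelfAdjoint (a - b) := ha.sub hb
    have h1 := tendsto_part a b ha hb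
    have h2 := tendsto_part b a hb ha
    have hmax := h1.max h2
    have hnorm : ‖a - b‖ = max (sSup (spectrum ℝ (a - b))) (sSup (spectrum ℝ (b - a))) := by
      rw [norm_eq_max hc, neg_sub]
    rw [hnorm]
    refine hmax.congr' ?_
    filter_upwards [Filter.eventually_ge_atTop 1] with n hn
    have hnpos : (0:ℝ) ≤ (n:ℝ) := Nat.cast_nonneg n
    have han : IsSelfAdjoint ((n:ℝ)⁻¹ • a) := sa_smul ha _
    have hbn : IsSelfAdjoint ((n:ℝ)⁻¹ • b) := sa_smul hb _
    have e1 : cfc Real.exp ((n:ℝ)⁻¹ • a) = exp ((n:ℝ)⁻¹ • a) :=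
      CFC.real_exp_eq_normedSpace_exp han
    have e2 : cfc Real.exp ((n:ℝ)⁻¹ • b) = exp ((n:ℝ)⁻¹ • b) :=
      CFC.real_exp_eq_normedSpace_exp hbn
    have hM1 : 0 < Mrel (cfc Real.exp ((n:ℝ)⁻¹ • a)) (cfc Real.exp ((n:ℝ)⁻¹ • b)) := by
      rw [e1, e2]; exact Mrel_exp_pos _ _ han hbn
    have hM2 : 0 < Mrel (cfc Real.exp ((n:ℝ)⁻¹ • b)) (cfc Real.exp ((n:ℝ)⁻¹ • a)) := by
      rw [e1, e2]; exact Mrel_exp_pos _ _ hbn han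
    set M1 := Mrel (cfc Real.exp ((n:ℝ)⁻¹ • a)) (cfc Real.exp ((n:ℝ)⁻¹ • b))
    set M2 := Mrel (cfc Real.exp ((n:ℝ)⁻¹ • b)) (cfc Real.exp ((n:ℝ)⁻¹ • a))
    have hlogmax : Real.log (max M1 M2) = max (Real.log M1) (Real.log M2) := by
      rcases le_total M1 M2 with h | h
      · rw [max_eq_right h, max_eq_right (Real.log_le_log hM1 h)]
      · rw [max_eq_left h, max_eq_left (Real.log_le_log hM2 h)]
    show max ((n:ℝ) * Real.log M1) ((n:ℝ) * Real.log M2) = (n:ℝ) * dT _ _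
    rw [dT, hlogmax, mul_max_of_nonneg _ _ hnpos]
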